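/- Fix a > 0. There exist constants C > 0 and η₀ > 0 such that for all η ≥ η₀ one has ‖L₋(η) − (−a, 1)/√(1+a²)‖ ≤ C/η and ‖L₊(η) − (0, 1)‖ ≤ C/η, where ‖·‖ is the Euclidean norm on ℝ². -/

import Mathlib

noncomputable def Mmat (a η : ℝ) : Matrix (Fin 2) (Fin 2) ℝ :=
  !![-η * a, 1 + η; 1, 0]

noncomputable def lamP (a η : ℝ) : ℝ :=
  (-(a * η) + Real.sqrt (a ^ 2 * η ^ 2 + 4 * (η + 1))) / 2

noncomputable def lamM (a η : ℝ) : ℝ :=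
  (-(a * η) - Real.sqrt (a ^ 2 * η ^ 2 + 4 * (η + 1))) / 2

noncomputable def Lp (a η : ℝ) : Fin 2 → ℝ :=
  (Real.sqrt ((1 + η) ^ 2 + lamP a η ^ 2))⁻¹ • ![lamP a η, 1 + η]

noncomputable def Lm (a η : ℝ) : Fin 2 → ℝ :=
  (Real.sqrt ((1 + η) ^ 2 + lamM a η ^ 2))⁻¹ • ![lamM a η, 1 + η]

noncomputable def eucNorm (v : Fin 2 → ℝ) : ℝ :=
  Real.sqrt (v 0 ^ 2 + v 1 ^ 2)

noncomputable def Pmat (a η : ℝ) : Matrix (Fin 2) (Fin 2) ℝ :=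
  Matrix.of ![Lp a η, Lm a η]

def Amat : Matrix (Fin 2) (Fin 2) ℝ := !![0, 1; 1, 0]

lemma sqrtQ_pos (x : ℝ) : 0 < Real.sqrt (1 + x ^ 2) :=
  Real.sqrt_pos.2 (by positivity)

lemma sqrtQ_sq (x : ℝ) : Real.sqrt (1 + x ^ 2) ^ 2 = 1 + x ^ 2 :=
  Real.sq_sqrt (by positivity)

lemma one_le_sqrtQ (x : ℝ) : 1 ≤ Real.sqrt (1 + x ^ 2) := by
  nlinarith [sqrtQ_sq x, Real.sqrt_nonneg (1 + x ^ 2), sq_nonneg x]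

lemma le_sqrtQ (x : ℝ) (hx : 0 ≤ x) : x ≤ Real.sqrt (1 + x ^ 2) := by
  nlinarith [sqrtQ_sq x, Real.sqrt_nonneg (1 + x ^ 2), sq_nonneg (x - Real.sqrt (1 + x ^ 2))]

lemma comp1_bound (t b : ℝ) (ht : 0 ≤ t) (hb : 0 ≤ b) :
    |t / Real.sqrt (1 + t ^ 2) - b / Real.sqrt (1 + b ^ 2)| ≤ |t - b| := by
  set P := Real.sqrt (1 + t ^ 2) with hPdef
  set Q := Real.sqrt (1 + b ^ 2) with hQdef
  have hP0 : 0 < P := sqrtQ_pos t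
  have hQ0 : 0 < Q := sqrtQ_pos b
  have hP2 : P ^ 2 = 1 + t ^ 2 := sqrtQ_sq t
  have hQ2 : Q ^ 2 = 1 + b ^ 2 := sqrtQ_sq b
  have hP1 : (1:ℝ) ≤ P := one_le_sqrtQ t
  have hQ1 : (1:ℝ) ≤ Q := one_le_sqrtQ b
  have key : |t * Q - b * P| ≤ |t - b| := by
    rcases eq_or_lt_of_le (add_nonneg ht hb) with h | h
    · have ht0 : t = 0 := by linarith
      have hb0 : b = 0 := by linarith
      simp [ht0, hb0]
    · have e : (t * Q - b * P) * (t * Q + b * P) = (t - b) * (t + b) := by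
        linear_combination t ^ 2 * hQ2 - b ^ 2 * hP2
      have hsum : t + b ≤ t * Q + b * P := by nlinarith
      have hsum0 : 0 < t * Q + b * P := by linarith
      have habs : |t * Q - b * P| * (t * Q + b * P) = |t - b| * (t + b) := by
        rw [← abs_of_pos hsum0, ← abs_mul, e, abs_mul, abs_of_pos h]
      nlinarith [abs_nonneg (t * Q - b * P), abs_nonneg (t - b)]
  have hPQ1 : (1:ℝ) ≤ P * Q := by nlinarith
  have e2 : t / P - b / Q = (t * Q - b * P) / (P * Q) := by
    field_simp
  rw [e2, abs_div, abs_of_pos (by positivity : (0:ℝ) < P * Q)]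
  calc |t * Q - b * P| / (P * Q) ≤ |t * Q - b * P| / 1 :=
        div_le_div_of_nonneg_left (abs_nonneg _) one_pos hPQ1
    _ = |t * Q - b * P| := div_one _
    _ ≤ |t - b| := key

lemma comp2_bound (t b : ℝ) (ht : 0 ≤ t) (hb : 0 ≤ b) :
    |1 / Real.sqrt (1 + t ^ 2) - 1 / Real.sqrt (1 + b ^ 2)| ≤ |t - b| := by
  set P := Real.sqrt (1 + t ^ 2) with hPdef
  set Q := Real.sqrt (1 + b ^ 2) with hQdef
  have hP0 : 0 < P := sqrtQ_pos t
  have hQ0 : 0 < Q := sqrtQ_pos b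
  have hP2 : P ^ 2 = 1 + t ^ 2 := sqrtQ_sq t
  have hQ2 : Q ^ 2 = 1 + b ^ 2 := sqrtQ_sq b
  have hP1 : (1:ℝ) ≤ P := one_le_sqrtQ t
  have hQ1 : (1:ℝ) ≤ Q := one_le_sqrtQ b
  have hPt : t ≤ P := le_sqrtQ t ht
  have hQb : b ≤ Q := le_sqrtQ b hb
  have key : |Q - P| ≤ |t - b| := by
    have e : (Q - P) * (Q + P) = (b - t) * (b + t) := by
      linear_combination hQ2 - hP2
    have hsum0 : 0 < Q + P := by linarith
    have habs : |Q - P| * (Q + P) = |t - b| * (b + t) := by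
      rw [← abs_of_pos hsum0, ← abs_mul, e, abs_mul, abs_sub_comm t b,
        abs_of_nonneg (by linarith : (0:ℝ) ≤ b + t)]
    nlinarith [abs_nonneg (Q - P), abs_nonneg (t - b)]
  have hPQ1 : (1:ℝ) ≤ P * Q := by nlinarith
  have e2 : 1 / P - 1 / Q = (Q - P) / (P * Q) := by
    field_simp
  rw [e2, abs_div, abs_of_pos (by positivity : (0:ℝ) < P * Q)]
  calc |Q - P| / (P * Q) ≤ |Q - P| / 1 :=
        div_le_div_of_nonneg_left (abs_nonneg _) one_pos hPQ1
    _ = |Q - P| := div_one _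
    _ ≤ |t - b| := key

lemma sqrt_add_sq_le (x y : ℝ) : Real.sqrt (x ^ 2 + y ^ 2) ≤ |x| + |y| := by
  have h : x ^ 2 + y ^ 2 ≤ (|x| + |y|) ^ 2 := by
    nlinarith [sq_abs x, sq_abs y, mul_nonneg (abs_nonneg x) (abs_nonneg y)]
  calc Real.sqrt (x ^ 2 + y ^ 2) ≤ Real.sqrt ((|x| + |y|) ^ 2) := Real.sqrt_le_sqrt h
    _ = |x| + |y| := Real.sqrt_sq (by positivity)

lemma core_bound (t b : ℝ) (ht : 0 ≤ t) (hb : 0 ≤ b) :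
    Real.sqrt ((t / Real.sqrt (1 + t ^ 2) - b / Real.sqrt (1 + b ^ 2)) ^ 2 +
      (1 / Real.sqrt (1 + t ^ 2) - 1 / Real.sqrt (1 + b ^ 2)) ^ 2) ≤ 2 * |t - b| := by
  calc _ ≤ |t / Real.sqrt (1 + t ^ 2) - b / Real.sqrt (1 + b ^ 2)| +
      |1 / Real.sqrt (1 + t ^ 2) - 1 / Real.sqrt (1 + b ^ 2)| := sqrt_add_sq_le _ _
    _ ≤ |t - b| + |t - b| := add_le_add (comp1_bound t b ht hb) (comp2_bound t b ht hb)
    _ = 2 * |t - b| := by ring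

set_option maxHeartbeats 1000000 in
theorem stmt8 (a : ℝ) (ha : 0 < a) :
    ∃ C > (0 : ℝ), ∃ η₀ > (0 : ℝ), ∀ η : ℝ, η₀ ≤ η →
      eucNorm (Lm a η - (Real.sqrt (1 + a ^ 2))⁻¹ • ![-a, 1]) ≤ C / η ∧
      eucNorm (Lp a η - ![0, 1]) ≤ C / η := by
  set C : ℝ := 2 * |1 - a ^ 2| / a + 2 / a + 1 with hCdef
  have hKn : (0:ℝ) ≤ 2 * |1 - a ^ 2| / a :=
    div_nonneg (mul_nonneg (by norm_num) (abs_nonneg _)) ha.le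
  have h2a : (0:ℝ) < 2 / a := div_pos (by norm_num) ha
  have hC0 : 0 < C := by rw [hCdef]; linarith
  have hCa : C * a = 2 * |1 - a ^ 2| + 2 + a := by
    rw [hCdef]; field_simp
  refine ⟨C, hC0, 1, one_pos, ?_⟩
  intro η hη
  have hη0 : (0:ℝ) < η := by linarith
  have hη1 : (0:ℝ) < 1 + η := by linarith
  set s := Real.sqrt (a ^ 2 * η ^ 2 + 4 * (η + 1)) with hsdef
  have hs2 : s ^ 2 = a ^ 2 * η ^ 2 + 4 * (η + 1) :=
    Real.sq_sqrt (by nlinarith [sq_nonneg (a * η)])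
  have hs0 : 0 ≤ s := Real.sqrt_nonneg _
  have haη : 0 < a * η := mul_pos ha hη0
  have hsge : a * η ≤ s := by
    nlinarith [sq_nonneg (s - a * η)]
  constructor
  · -- Lm part
    set t := (a * η + s) / (2 * (1 + η)) with htdef
    have ht0 : 0 ≤ t := div_nonneg (by linarith) (by linarith)
    have hlamM : lamM a η = -((1 + η) * t) := by
      rw [htdef]; unfold lamM; rw [← hsdef]; field_simp; ring
    have hN : Real.sqrt ((1 + η) ^ 2 + lamM a η ^ 2) = (1 + η) * Real.sqrt (1 + t ^ 2) := by
      rw [hlamM, show (1 + η) ^ 2 + (-((1 + η) * t)) ^ 2 = (1 + η) ^ 2 * (1 + t ^ 2) by ring,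
        Real.sqrt_mul (sq_nonneg _), Real.sqrt_sq hη1.le]
    have hP0 : (0:ℝ) < Real.sqrt (1 + t ^ 2) := sqrtQ_pos t
    have hLm0 : Lm a η 0 = -(t / Real.sqrt (1 + t ^ 2)) := by
      simp only [Lm, Pi.smul_apply, Matrix.cons_val_zero, smul_eq_mul]
      rw [hN, hlamM]
      field_simp
    have hLm1 : Lm a η 1 = 1 / Real.sqrt (1 + t ^ 2) := by
      simp only [Lm, Pi.smul_apply, Matrix.cons_val_one, Matrix.head_cons, Matrix.cons_val_zero, smul_eq_mul]
      rw [hN]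
      field_simp
    have hA0 : (0:ℝ) < Real.sqrt (1 + a ^ 2) := sqrtQ_pos a
    have hv : eucNorm (Lm a η - (Real.sqrt (1 + a ^ 2))⁻¹ • ![-a, 1]) =
        Real.sqrt ((t / Real.sqrt (1 + t ^ 2) - a / Real.sqrt (1 + a ^ 2)) ^ 2 +
          (1 / Real.sqrt (1 + t ^ 2) - 1 / Real.sqrt (1 + a ^ 2)) ^ 2) := by
      unfold eucNorm
      simp only [Pi.sub_apply, Pi.smul_apply, Matrix.cons_val_zero, Matrix.cons_val_one,
        Matrix.head_cons, smul_eq_mul, hLm0, hLm1]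
      congr 1
      field_simp
      ring
    have hcore := core_bound t a ht0 ha.le
    -- bound |t - a|
    have hta : t - a = (s - a * (η + 2)) / (2 * (1 + η)) := by
      rw [htdef]; field_simp; ring
    have hmul : (s - a * (η + 2)) * (s + a * (η + 2)) = 4 * (1 - a ^ 2) * (η + 1) := by
      linear_combination hs2
    have hX : a * η ≤ a * (η + 2) := by nlinarith
    have hsumX : 0 < s + a * (η + 2) := by linarith
    have habs : |s - a * (η + 2)| * (s + a * (η + 2)) = 4 * |1 - a ^ 2| * (η + 1) := by
      rw [← abs_of_pos hsumX, ← abs_mul, hmul]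
      rw [show (4:ℝ) * (1 - a ^ 2) * (η + 1) = (4 * (η + 1)) * (1 - a ^ 2) by ring, abs_mul,
        abs_of_nonneg (by linarith : (0:ℝ) ≤ 4 * (η + 1))]
      ring
    have e1 : |t - a| * (2 * (1 + η)) = |s - a * (η + 2)| := by
      rw [hta, abs_div, abs_of_pos (by linarith : (0:ℝ) < 2 * (1 + η)),
        div_mul_cancel₀ _ (by linarith : (2 * (1 + η) : ℝ) ≠ 0)]
    have hta_bound : |t - a| ≤ |1 - a ^ 2| / (a * η) := by
      rw [le_div_iff₀ haη]
      have c1 : |t - a| * (2 * (1 + η)) * (2 * (a * η)) ≤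
          |t - a| * (2 * (1 + η)) * (s + a * (η + 2)) := by
        apply mul_le_mul_of_nonneg_left (by linarith)
        exact mul_nonneg (abs_nonneg _) (by linarith)
      rw [e1, habs] at c1
      nlinarith [abs_nonneg (1 - a ^ 2), abs_nonneg (t - a)]
    have hfin : 2 * |1 - a ^ 2| / (a * η) ≤ C / η := by
      rw [div_le_div_iff₀ haη hη0]
      have h1 : 2 * |1 - a ^ 2| ≤ C * a := by rw [hCa]; linarith
      nlinarith
    calc eucNorm (Lm a η - (Real.sqrt (1 + a ^ 2))⁻¹ • ![-a, 1])
        ≤ 2 * |t - a| := by rw [hv]; exact hcore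
      _ ≤ 2 * (|1 - a ^ 2| / (a * η)) := by linarith
      _ = 2 * |1 - a ^ 2| / (a * η) := by ring
      _ ≤ C / η := hfin
  · -- Lp part
    have hsum2 : 0 < s + a * η := by linarith
    set u := 2 / (s + a * η) with hudef
    have hu0 : 0 ≤ u := le_of_lt (div_pos (by norm_num) hsum2)
    have hlamP : lamP a η = (1 + η) * u := by
      rw [hudef]; unfold lamP; rw [← hsdef]
      field_simp
      linear_combination hs2
    have hN : Real.sqrt ((1 + η) ^ 2 + lamP a η ^ 2) = (1 + η) * Real.sqrt (1 + u ^ 2) := by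
      rw [hlamP, show (1 + η) ^ 2 + ((1 + η) * u) ^ 2 = (1 + η) ^ 2 * (1 + u ^ 2) by ring,
        Real.sqrt_mul (sq_nonneg _), Real.sqrt_sq hη1.le]
    have hP0 : (0:ℝ) < Real.sqrt (1 + u ^ 2) := sqrtQ_pos u
    have hLp0 : Lp a η 0 = u / Real.sqrt (1 + u ^ 2) := by
      simp only [Lp, Pi.smul_apply, Matrix.cons_val_zero, smul_eq_mul]
      rw [hN, hlamP]
      field_simp
    have hLp1 : Lp a η 1 = 1 / Real.sqrt (1 + u ^ 2) := by
      simp only [Lp, Pi.smul_apply, Matrix.cons_val_one, Matrix.head_cons, Matrix.cons_val_zero, smul_eq_mul]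
      rw [hN]
      field_simp
    have hcore := core_bound u 0 hu0 le_rfl
    norm_num [Real.sqrt_one] at hcore
    rw [abs_of_nonneg hu0] at hcore
    have hv : eucNorm (Lp a η - ![0, 1]) =
        Real.sqrt ((u / Real.sqrt (1 + u ^ 2)) ^ 2 + ((Real.sqrt (1 + u ^ 2))⁻¹ - 1) ^ 2) := by
      unfold eucNorm
      simp only [Pi.sub_apply, Matrix.cons_val_zero, Matrix.cons_val_one, Matrix.head_cons,
        hLp0, hLp1]
      congr 1
      ring
    have hu_bound : u ≤ 1 / (a * η) := by
      rw [hudef, div_le_div_iff₀ hsum2 haη]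
      linarith
    have hfin : 2 / (a * η) ≤ C / η := by
      rw [div_le_div_iff₀ haη hη0]
      have h1 : (2:ℝ) ≤ C * a := by rw [hCa]; nlinarith [abs_nonneg (1 - a ^ 2)]
      nlinarith
    calc eucNorm (Lp a η - ![0, 1]) ≤ 2 * u := by rw [hv]; exact hcore
      _ ≤ 2 * (1 / (a * η)) := by linarith
      _ = 2 / (a * η) := by ring
      _ ≤ C / η := hfin
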